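/- arXiv:2302.08448 — 4 statements merged into one kernel-verified Lean document; each statement's English description precedes it below -/
import Mathlib

section
/- Let α > 2β > 0, ρ = (α+√(α²−4β²))/(2β), and for k ≥ 1 define d_k = b_{k+1}/b_k where b_k = (1/√(α²−4β²))·[(βρ)^{k+1} − (β/ρ)^{k+1}]. Then |√(βρ) − √(d_k)| < √β · ρ^{−k−1/2}. -/
open Real

/-- Convergence of the diagonal entries of the finite reverse Cholesky factor:
`|√(βρ) − √(d_k)| < √β · ρ^{−k−1/2}`. -/
theorem stmt_5 (α β : ℝ) (hβ : 0 < β) (hα : 2 * β < α)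
    (ρ : ℝ) (hρ : ρ = (α + Real.sqrt (α ^ 2 - 4 * β ^ 2)) / (2 * β))
    (b : ℕ → ℝ)
    (hb : ∀ k, b k = (1 / Real.sqrt (α ^ 2 - 4 * β ^ 2)) *
      ((β * ρ) ^ (k + 1) - (β / ρ) ^ (k + 1)))
    (d : ℕ → ℝ) (hd : ∀ k, d k = b (k + 1) / b k) :
    ∀ k : ℕ, 1 ≤ k →
      |Real.sqrt (β * ρ) - Real.sqrt (d k)| < Real.sqrt β * ρ ^ (-(k : ℝ) - 1 / 2) := by
  intro k hk
  have h4 : (0:ℝ) < α ^ 2 - 4 * β ^ 2 := by nlinarith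
  set s := Real.sqrt (α ^ 2 - 4 * β ^ 2) with hs
  have hs0 : 0 < s := Real.sqrt_pos.mpr h4
  have hs2 : s ^ 2 = α ^ 2 - 4 * β ^ 2 := Real.sq_sqrt h4.le
  have hρ1 : 1 < ρ := by rw [hρ, lt_div_iff₀ (by linarith)]; nlinarith
  have hρ0 : 0 < ρ := lt_trans one_pos hρ1
  set p := β * ρ with hp
  set q := β / ρ with hq
  have hp0 : 0 < p := mul_pos hβ hρ0
  have hq0 : 0 < q := div_pos hβ hρ0
  have hpval : p = (α + s) / 2 := by rw [hp, hρ]; field_simp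
  have hqval : q = (α - s) / 2 := by
    rw [hq, hρ]; rw [div_div_eq_mul_div]; rw [div_eq_div_iff (by nlinarith) (by norm_num)]
    nlinarith
  have hqp : q < p := by rw [hpval, hqval]; linarith
  have hb' : ∀ j, b j = (p ^ (j+1) - q ^ (j+1)) / s := by
    intro j; rw [hb]; ring
  have hDpos : 0 < p ^ (k+1) - q ^ (k+1) :=
    sub_pos.mpr (pow_lt_pow_left₀ hqp hq0.le (Nat.succ_ne_zero k))
  have hdk : d k = (p ^ (k+2) - q ^ (k+2)) / (p ^ (k+1) - q ^ (k+1)) := by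
    rw [hd, hb' (k+1), hb' k]
    field_simp
  -- lower bound
  have hlt1 : p < d k := by
    rw [hdk, lt_div_iff₀ hDpos]
    have key : q * q ^ (k+1) < p * q ^ (k+1) :=
      mul_lt_mul_of_pos_right hqp (pow_pos hq0 (k+1))
    calc p * (p ^ (k+1) - q ^ (k+1)) = p ^ (k+2) - p * q ^ (k+1) := by ring
      _ < p ^ (k+2) - q * q ^ (k+1) := by linarith
      _ = p ^ (k+2) - q ^ (k+2) := by ring
  -- upper bound with c := q^(k+1)/p^k
  set c := q ^ (k+1) / p ^ k with hcdef
  have hcp : c * p ^ k = q ^ (k+1) := div_mul_cancel₀ _ (pow_pos hp0 k).ne'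
  have hcq : c < q := by
    rw [hcdef, div_lt_iff₀ (pow_pos hp0 k)]
    calc q ^ (k+1) = q * q ^ k := by ring
      _ < q * p ^ k := by
          exact mul_lt_mul_of_pos_left (pow_lt_pow_left₀ hqp hq0.le (by omega)) hq0
  have hlt2 : d k < p + c := by
    rw [hdk, div_lt_iff₀ hDpos]
    have key : (p + c) * (p ^ (k+1) - q ^ (k+1)) - (p ^ (k+2) - q ^ (k+2))
        = (q - c) * q ^ (k+1) + (c * p ^ k - q ^ (k+1)) * p := by ring
    have h1 : 0 < (q - c) * q ^ (k+1) := mul_pos (by linarith) (pow_pos hq0 (k+1))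
    have h2 : c * p ^ k - q ^ (k+1) = 0 := by rw [hcp]; ring
    nlinarith [key]
  -- c = β / ρ^(2k+1)
  have hceq : c = β * (ρ ^ (2*k+1))⁻¹ := by
    rw [hcdef, hq, hp, div_pow, mul_pow]
    field_simp
    ring
  set ε := Real.sqrt β * ρ ^ (-(k : ℝ) - 1 / 2) with hεdef
  have hεpos : 0 < ε := mul_pos (Real.sqrt_pos.mpr hβ) (Real.rpow_pos_of_pos hρ0 _)
  have hspe : Real.sqrt p * ε = β * (ρ ^ k)⁻¹ := by
    have hr : Real.sqrt ρ * ρ ^ (-(k:ℝ) - 1/2) = (ρ ^ k)⁻¹ := by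
      rw [Real.sqrt_eq_rpow, ← Real.rpow_add hρ0,
        show (1:ℝ)/2 + (-(k:ℝ) - 1/2) = -(k:ℝ) by ring,
        Real.rpow_neg hρ0.le, Real.rpow_natCast]
    rw [hp, Real.sqrt_mul hβ.le, hεdef]
    calc Real.sqrt β * Real.sqrt ρ * (Real.sqrt β * ρ ^ (-(k:ℝ) - 1/2))
        = (Real.sqrt β * Real.sqrt β) * (Real.sqrt ρ * ρ ^ (-(k:ℝ) - 1/2)) := by ring
      _ = β * (ρ ^ k)⁻¹ := by rw [Real.mul_self_sqrt hβ.le, hr]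
  have hcle : c ≤ 2 * (Real.sqrt p * ε) := by
    rw [hceq, hspe]
    have h1 : ρ ^ k ≤ ρ ^ (2*k+1) := pow_le_pow_right₀ hρ1.le (by omega)
    have h2 : (ρ ^ (2*k+1))⁻¹ ≤ (ρ ^ k)⁻¹ :=
      inv_anti₀ (pow_pos hρ0 k) h1
    have h3 : (0:ℝ) < (ρ ^ k)⁻¹ := by positivity
    nlinarith
  have hfin : d k < (Real.sqrt p + ε) ^ 2 := by
    have hsq : (Real.sqrt p + ε) ^ 2 = p + 2 * (Real.sqrt p * ε) + ε ^ 2 := by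
      rw [add_sq, Real.sq_sqrt hp0.le]; ring
    linarith [sq_nonneg ε, hlt2, hcle]
  have hd2 : Real.sqrt (d k) < Real.sqrt p + ε := by
    rw [Real.sqrt_lt' (by positivity)]
    exact hfin
  have hd1 : Real.sqrt p < Real.sqrt (d k) := Real.sqrt_lt_sqrt hp0.le hlt1
  rw [abs_sub_comm, abs_of_pos (sub_pos.mpr hd1)]
  linarith
end

section
/- Let α > 2β > 0, ρ = (α+√(α²−4β²))/(2β), and d_k = b_{k+1}/b_k with b_k as in the previous context. Then |√(β/ρ) − β/√(d_k)| < √β · ρ^{−k−1/2} for all k ≥ 1. -/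
open Real

/-- Convergence of the subdiagonal entries of the finite reverse Cholesky factor:
`|√(β/ρ) − β/√(d_k)| < √β · ρ^{−k−1/2}`. -/
theorem stmt_6 (α β : ℝ) (hβ : 0 < β) (hα : 2 * β < α)
    (ρ : ℝ) (hρ : ρ = (α + Real.sqrt (α ^ 2 - 4 * β ^ 2)) / (2 * β))
    (b : ℕ → ℝ)
    (hb : ∀ k, b k = (1 / Real.sqrt (α ^ 2 - 4 * β ^ 2)) *
      ((β * ρ) ^ (k + 1) - (β / ρ) ^ (k + 1)))
    (d : ℕ → ℝ) (hd : ∀ k, d k = b (k + 1) / b k) :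
    ∀ k : ℕ, 1 ≤ k →
      |Real.sqrt (β / ρ) - β / Real.sqrt (d k)| < Real.sqrt β * ρ ^ (-(k : ℝ) - 1 / 2) := by
  intro k hk
  have hD : 0 < α ^ 2 - 4 * β ^ 2 := by nlinarith
  set S := Real.sqrt (α ^ 2 - 4 * β ^ 2) with hSdef
  have hSpos : 0 < S := Real.sqrt_pos.mpr hD
  have hS2 : S ^ 2 = α ^ 2 - 4 * β ^ 2 := Real.sq_sqrt hD.le
  have hρ1 : 1 < ρ := by
    rw [hρ, lt_div_iff₀ (by positivity)]; nlinarith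
  have hρ0 : 0 < ρ := lt_trans one_pos hρ1
  set A := β * ρ with hA
  set B := β / ρ with hB
  have hABβ : A * B = β ^ 2 := by
    rw [hA, hB]; field_simp
  have hBpos : 0 < B := by positivity
  have hApos : 0 < A := by positivity
  have hA' : A = (α + S) / 2 := by rw [hA, hρ]; field_simp
  have hB' : B = (α - S) / 2 := by
    rw [hB, hρ]
    rw [div_div_eq_mul_div, div_eq_div_iff (by nlinarith) (by norm_num)]
    nlinarith
  have hSAB : A - B = S := by rw [hA', hB']; ring
  have hBA : B < A := by nlinarith
  have hbk : ∀ n, b n = (A ^ (n + 1) - B ^ (n + 1)) / S := by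
    intro n; rw [hb n]; ring
  clear_value S A B
  clear hSdef hA' hB' hb hρ
  set P := A ^ (k + 1) - B ^ (k + 1) with hPdef
  set Q := A ^ (k + 2) - B ^ (k + 2) with hQdef
  have hPpos : 0 < P := by
    rw [hPdef]
    have := pow_lt_pow_left₀ hBA hBpos.le (n := k + 1) (by omega)
    linarith
  have hQpos : 0 < Q := by
    rw [hQdef]
    have := pow_lt_pow_left₀ hBA hBpos.le (n := k + 2) (by omega)
    linarith
  have hdk : d k = Q / P := by
    rw [hd k, hbk, hbk]
    rw [div_div_div_cancel_right₀]
    exact hSpos.ne'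
  have hdkpos : 0 < d k := by rw [hdk]; exact div_pos hQpos hPpos
  clear_value P Q
  -- t = A * P / Q
  set t := A * P / Q with htdef
  clear_value t
  have ht0 : 0 ≤ t := by
    rw [htdef]; exact (div_pos (mul_pos hApos hPpos) hQpos).le
  have ht1 : t ≤ 1 := by
    rw [htdef, div_le_one hQpos, hPdef, hQdef]
    have e0 : A * (A ^ (k+1) - B ^ (k+1)) = A * A ^ (k+1) - A * B ^ (k+1) := by ring
    have e1 : A ^ (k+2) = A * A ^ (k+1) := by ring
    have e2 : B ^ (k+2) = B * B ^ (k+1) := by ring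
    have h3 : B * B ^ (k+1) ≤ A * B ^ (k+1) :=
      mul_le_mul_of_nonneg_right hBA.le (pow_nonneg hBpos.le _)
    linarith
  have hsqrt_t1 : Real.sqrt t ≤ 1 := by
    rw [show (1:ℝ) = Real.sqrt 1 by simp]
    exact Real.sqrt_le_sqrt ht1
  -- β / √(d k) = √B * √t
  have hform : β / Real.sqrt (d k) = Real.sqrt B * Real.sqrt t := by
    rw [← Real.sqrt_mul hBpos.le]
    have h1 : β / Real.sqrt (d k) = Real.sqrt (β ^ 2 / d k) := by
      rw [Real.sqrt_div (by positivity), Real.sqrt_sq hβ.le]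
    rw [h1]
    congr 1
    rw [hdk, ← hABβ, htdef]
    field_simp [hPpos.ne', hQpos.ne']
  -- rewrite RHS
  have hρB : ρ = β / B := by rw [hB]; field_simp
  have hRHS : Real.sqrt β * ρ ^ (-(k : ℝ) - 1 / 2) = Real.sqrt B / ρ ^ k := by
    rw [show (-(k:ℝ) - 1/2) = (-(k:ℝ)) + (-(1/2)) by ring, Real.rpow_add hρ0,
      Real.rpow_neg hρ0.le, Real.rpow_natCast, Real.rpow_neg hρ0.le]
    have h12 : ρ ^ ((1:ℝ)/2) = Real.sqrt ρ := by
      rw [Real.sqrt_eq_rpow]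
    rw [h12]
    have : B = β / ρ := by
      rw [hρB]; field_simp
    rw [this, Real.sqrt_div hβ.le, div_div]
    ring
  rw [hform, hRHS]
  have habs : |Real.sqrt B - Real.sqrt B * Real.sqrt t|
      = Real.sqrt B * (1 - Real.sqrt t) := by
    rw [abs_of_nonneg]
    · ring
    · have := Real.sqrt_nonneg B
      nlinarith
  rw [habs]
  have hsB : 0 < Real.sqrt B := Real.sqrt_pos.mpr hBpos
  rw [div_eq_mul_inv, mul_lt_mul_iff_right₀ hsB]
  -- now: 1 - √t < (ρ^k)⁻¹
  have hts : t ≤ Real.sqrt t := by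
    calc t = Real.sqrt t * Real.sqrt t := (Real.mul_self_sqrt ht0).symm
      _ ≤ Real.sqrt t * 1 := mul_le_mul_of_nonneg_left hsqrt_t1 (Real.sqrt_nonneg t)
      _ = Real.sqrt t := mul_one _
  have h1mt : 1 - t = B ^ (k + 1) * (A - B) / Q := by
    rw [htdef]
    field_simp [hQpos.ne']
    rw [hPdef, hQdef]
    ring
  have hρk : (ρ ^ k)⁻¹ = B ^ k / β ^ k := by
    rw [hρB]; rw [div_pow]; rw [inv_div]
  have hβA : β < A := by
    have h2 : β ^ 2 < A ^ 2 := by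
      rw [← hABβ, sq]
      exact mul_lt_mul_of_pos_left hBA hApos
    exact lt_of_pow_lt_pow_left₀ 2 hApos.le h2
  have hkey : B ^ (k + 1) * (A - B) / Q < B ^ k / β ^ k := by
    rw [div_lt_div_iff₀ hQpos (pow_pos hβ k)]
    have hβk : β ^ k ≤ A ^ k := pow_le_pow_left₀ hβ.le hβA.le k
    have hQgt : (A - B) * A ^ (k + 1) < Q := by
      have e : Q - (A - B) * A ^ (k + 1) = B * P := by rw [hQdef, hPdef]; ring
      have := mul_pos hBpos hPpos
      linarith
    have hABpos : 0 < A - B := sub_pos.mpr hBA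
    calc B ^ (k + 1) * (A - B) * β ^ k ≤ B ^ (k+1) * (A - B) * A ^ k :=
          mul_le_mul_of_nonneg_left hβk
            (mul_nonneg (pow_nonneg hBpos.le _) hABpos.le)
      _ = (B * A ^ k) * ((A - B) * B ^ k) := by rw [pow_succ]; ring
      _ < (A * A ^ k) * ((A - B) * B ^ k) :=
          mul_lt_mul_of_pos_right (mul_lt_mul_of_pos_right hBA (pow_pos hApos k))
            (mul_pos hABpos (pow_pos hBpos k))
      _ = ((A - B) * A ^ (k+1)) * B ^ k := by rw [pow_succ]; ring
      _ < Q * B ^ k := mul_lt_mul_of_pos_right hQgt (pow_pos hBpos k)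
      _ = B ^ k * Q := mul_comm _ _
  rw [hρk]
  calc 1 - Real.sqrt t ≤ 1 - t := by linarith
    _ = B ^ (k + 1) * (A - B) / Q := h1mt
    _ < B ^ k / β ^ k := hkey
end

section
/- Let A be a finite symmetric positive-definite M-matrix (Stieltjes matrix), i.e., A_{ii} > 0 and A_{ij} ≤ 0 for i ≠ j. Then in the Cholesky factorization A = RᵀR with R upper triangular having positive diagonal, R is an M-matrix: R_{ii} > 0 and R_{ij} ≤ 0 for i < j. -/
open Matrix

/-- The upper-triangular Cholesky factor (with positive diagonal) of a
symmetric positive-definite M-matrix (Stieltjes matrix) is itself an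
M-matrix: positive diagonal and nonpositive strict upper entries. -/
theorem stmt_11 {n : ℕ} (A R : Matrix (Fin n) (Fin n) ℝ)
    (hApd : A.PosDef) (hAsym : A.IsSymm)
    (hAdiag : ∀ i, 0 < A i i)
    (hAoff : ∀ i j, i ≠ j → A i j ≤ 0)
    (hRtri : ∀ i j : Fin n, j < i → R i j = 0)
    (hRdiag : ∀ i, 0 < R i i)
    (hchol : A = Rᵀ * R) :
    (∀ i, 0 < R i i) ∧ ∀ i j : Fin n, i < j → R i j ≤ 0 := by
  refine ⟨hRdiag, ?_⟩
  -- key entry formula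
  have hA : ∀ i j : Fin n, A i j = ∑ k, R k i * R k j := by
    intro i j
    rw [hchol]
    simp [Matrix.mul_apply, Matrix.transpose_apply]
  suffices H : ∀ m : ℕ, ∀ i j : Fin n, i.val = m → i < j → R i j ≤ 0 by
    intro i j hij; exact H i.val i j rfl hij
  intro m
  induction m using Nat.strong_induction_on with
  | _ m IH =>
    intro i j him hij
    subst him
    have hsplit : A i j = R i i * R i j + ∑ k ∈ Finset.Iio i, R k i * R k j := by
      rw [hA i j]
      have h1 : ∑ k, R k i * R k j = ∑ k ∈ Finset.Iic i, R k i * R k j := by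
        symm
        apply Finset.sum_subset (Finset.subset_univ _)
        intro k _ hk
        have : i < k := by simpa using hk
        rw [hRtri k i this, zero_mul]
      rw [h1, ← Finset.Iio_insert, Finset.sum_insert (by simp)]
    have hS : 0 ≤ ∑ k ∈ Finset.Iio i, R k i * R k j := by
      apply Finset.sum_nonneg
      intro k hk
      have hki : k < i := by simpa using hk
      exact mul_nonneg_of_nonpos_of_nonpos (IH k.val hki k i rfl hki)
        (IH k.val hki k j rfl (hki.trans hij))
    have hAij : A i j ≤ 0 := hAoff i j (ne_of_lt hij)
    have : R i i * R i j ≤ R i i * 0 := by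
      rw [mul_zero]; linarith
    exact le_of_mul_le_mul_left this (hRdiag i)
end

section
/- Let (p_n) be the orthonormal Legendre polynomials on [−1,1] with respect to Lebesgue measure, and let R be the upper-triangular Cholesky factor of I + X_P², where X_P is the Legendre Jacobi matrix. Then the operator norm of RᵀR equals 2, and hence for every n, |R_{n,n}| + |R_{n,n+2}| ≤ 2. -/
open MeasureTheory Polynomial Finset

lemma key_expand (p : ℕ → Polynomial ℝ) (w : ℝ → ℝ) (hw : Continuous w) (N : ℕ) (v : Fin N → ℝ) :
    (∫ t in Set.Icc (-1:ℝ) 1, (∑ i, v i * (p (i:ℕ)).eval t)^2 * w t)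
    = ∑ i : Fin N, ∑ j : Fin N, v i * v j *
        ∫ t in Set.Icc (-1:ℝ) 1, (p (i:ℕ)).eval t * (p (j:ℕ)).eval t * w t := by
  have hptw : ∀ t : ℝ, (∑ i, v i * (p (i:ℕ)).eval t)^2 * w t
      = ∑ i : Fin N, ∑ j : Fin N, v i * v j * ((p (i:ℕ)).eval t * (p (j:ℕ)).eval t * w t) := by
    intro t
    rw [sq, Finset.sum_mul_sum, Finset.sum_mul]
    refine Finset.sum_congr rfl fun i _ => ?_
    rw [Finset.sum_mul]
    exact Finset.sum_congr rfl fun j _ => by ring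
  have hcont : ∀ (i j : Fin N), Continuous fun t => v i * v j *
      ((p (i:ℕ)).eval t * (p (j:ℕ)).eval t * w t) := by
    intro i j
    exact continuous_const.mul (((p _).continuous.mul (p _).continuous).mul hw)
  simp_rw [hptw]
  rw [MeasureTheory.integral_finset_sum _ (fun i _ => by
    exact MeasureTheory.integrable_finset_sum _ (fun j _ => (hcont i j).integrableOn_Icc))]
  refine Finset.sum_congr rfl fun i _ => ?_
  rw [MeasureTheory.integral_finset_sum _ (fun j _ => (hcont i j).integrableOn_Icc)]
  exact Finset.sum_congr rfl fun j _ => MeasureTheory.integral_const_mul _ _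

lemma pair_expand (p : ℕ → Polynomial ℝ) (w : ℝ → ℝ) (hw : Continuous w) (mm nn : ℕ) (a b : ℝ) :
    (∫ t in Set.Icc (-1:ℝ) 1, (a * (p mm).eval t + b * (p nn).eval t)^2 * w t)
    = a^2 * (∫ t in Set.Icc (-1:ℝ) 1, (p mm).eval t * (p mm).eval t * w t)
      + 2*a*b * (∫ t in Set.Icc (-1:ℝ) 1, (p mm).eval t * (p nn).eval t * w t)
      + b^2 * (∫ t in Set.Icc (-1:ℝ) 1, (p nn).eval t * (p nn).eval t * w t) := by
  have h1 : IntegrableOn (fun t => a^2 * ((p mm).eval t * (p mm).eval t * w t))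
      (Set.Icc (-1:ℝ) 1) :=
    (continuous_const.mul (((p mm).continuous.mul (p mm).continuous).mul hw)).integrableOn_Icc
  have h2 : IntegrableOn (fun t => 2*a*b * ((p mm).eval t * (p nn).eval t * w t))
      (Set.Icc (-1:ℝ) 1) :=
    (continuous_const.mul (((p mm).continuous.mul (p nn).continuous).mul hw)).integrableOn_Icc
  have h3 : IntegrableOn (fun t => b^2 * ((p nn).eval t * (p nn).eval t * w t))
      (Set.Icc (-1:ℝ) 1) :=
    (continuous_const.mul (((p nn).continuous.mul (p nn).continuous).mul hw)).integrableOn_Icc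
  rw [show (fun t => (a * (p mm).eval t + b * (p nn).eval t)^2 * w t)
      = (fun t => a^2 * ((p mm).eval t * (p mm).eval t * w t)
        + (2*a*b * ((p mm).eval t * (p nn).eval t * w t)
          + b^2 * ((p nn).eval t * (p nn).eval t * w t)))
      from funext fun t => by ring]
  have h23 : IntegrableOn (fun t => 2*a*b * ((p mm).eval t * (p nn).eval t * w t)
      + b^2 * ((p nn).eval t * (p nn).eval t * w t)) (Set.Icc (-1:ℝ) 1) := h2.add h3
  rw [MeasureTheory.integral_add h1 h23, MeasureTheory.integral_add h2 h3,
    MeasureTheory.integral_const_mul, MeasureTheory.integral_const_mul,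
    MeasureTheory.integral_const_mul]
  ring

lemma mono_lemma (g : ℝ → ℝ) (hg : Continuous g) :
    (∫ t in Set.Icc (-1:ℝ) 1, (g t)^2 * (1 + t^2)) ≤ 2 * ∫ t in Set.Icc (-1:ℝ) 1, (g t)^2 := by
  rw [← MeasureTheory.integral_const_mul]
  apply MeasureTheory.setIntegral_mono_on
  · exact ((hg.pow 2).mul (continuous_const.add (continuous_pow 2))).integrableOn_Icc
  · exact (continuous_const.mul (hg.pow 2)).integrableOn_Icc
  · exact measurableSet_Icc
  · intro t ht
    rw [Set.mem_Icc] at ht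
    have h1 : t^2 ≤ 1 := by nlinarith [ht.1, ht.2]
    nlinarith [sq_nonneg (g t), h1]

lemma intIcc_even (k : ℕ) :
    (∫ t in Set.Icc (-1:ℝ) 1, t^(2*k)) = 2/(2*(k:ℝ)+1) := by
  rw [MeasureTheory.integral_Icc_eq_integral_Ioc,
    ← intervalIntegral.integral_of_le (by norm_num : (-1:ℝ) ≤ 1), integral_pow]
  rw [show ((-1:ℝ))^(2*k+1) = -1 by simp [pow_succ, pow_mul]]
  push_cast
  ring

lemma span_lemma (p : ℕ → Polynomial ℝ) (hdeg : ∀ n, (p n).natDegree = n)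
    (hlead : ∀ n, 0 < (p n).leadingCoeff) :
    ∀ k (q : Polynomial ℝ), q.natDegree ≤ k → ∃ v : Fin (k+1) → ℝ,
      q = ∑ i : Fin (k+1), Polynomial.C (v i) * p (i:ℕ) := by
  intro k
  induction k with
  | zero =>
    intro q hq
    have hp0 : p 0 = Polynomial.C ((p 0).coeff 0) := (Polynomial.eq_C_of_natDegree_le_zero (hdeg 0).le)
    have hc0 : (p 0).coeff 0 ≠ 0 := by
      have := hlead 0
      rw [Polynomial.leadingCoeff, hdeg 0] at this
      exact ne_of_gt this
    refine ⟨fun _ => q.coeff 0 / (p 0).coeff 0, ?_⟩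
    rw [Fin.sum_univ_one]
    calc q = Polynomial.C (q.coeff 0 / (p 0).coeff 0) * Polynomial.C ((p 0).coeff 0) := by
            rw [← Polynomial.C_mul, div_mul_cancel₀ _ hc0]
            exact Polynomial.eq_C_of_natDegree_le_zero hq
      _ = _ := by rw [← hp0]; norm_num
  | succ k ih =>
    intro q hq
    set c := q.coeff (k+1) / (p (k+1)).coeff (k+1) with hc
    have hlc : (p (k+1)).coeff (k+1) ≠ 0 := by
      have := hlead (k+1)
      rw [Polynomial.leadingCoeff, hdeg (k+1)] at this
      exact ne_of_gt this
    have hq' : (q - Polynomial.C c * p (k+1)).natDegree ≤ k := by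
      rw [Polynomial.natDegree_le_iff_coeff_eq_zero]
      intro m hm
      rcases eq_or_lt_of_le (Nat.succ_le_of_lt hm) with h | h
      · simp only [Polynomial.coeff_sub, Polynomial.coeff_C_mul, ← h, hc]
        rw [div_mul_cancel₀ _ hlc, sub_self]
      · have h1 : q.coeff m = 0 := Polynomial.coeff_eq_zero_of_natDegree_lt (lt_of_le_of_lt hq h)
        have h2 : (p (k+1)).coeff m = 0 := Polynomial.coeff_eq_zero_of_natDegree_lt (by rw [hdeg]; exact h)
        simp [h1, h2]
    obtain ⟨v, hv⟩ := ih _ hq'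
    refine ⟨Fin.snoc v c, ?_⟩
    rw [Fin.sum_univ_castSucc]
    simp only [Fin.snoc_castSucc, Fin.snoc_last, Fin.coe_castSucc, Fin.val_last]
    rw [← hv]
    ring

/-- Let `p` be the orthonormal Legendre polynomials on `[-1,1]` and `R` the
upper-triangular Cholesky factor of `I + X_P²`, i.e. of the matrix `M` of
multiplication by `1 + t²` (which by parity has only the bands `0` and `2`).
Then the `ℓ²` operator norm of `RᵀR = M`, expressed as the supremum of its
quadratic form over finitely supported unit vectors, equals `2`; hence
`|R_{n,n}| + |R_{n,n+2}| ≤ 2` for every `n`. -/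
theorem stmt_12
    (p : ℕ → Polynomial ℝ)
    (hdeg : ∀ n, (p n).natDegree = n) (hlead : ∀ n, 0 < (p n).leadingCoeff)
    (horth : ∀ m n, (∫ t in Set.Icc (-1 : ℝ) 1, (p m).eval t * (p n).eval t) =
      if m = n then (1 : ℝ) else 0)
    (M : ℕ → ℕ → ℝ)
    (hM : ∀ m n, M m n =
      ∫ t in Set.Icc (-1 : ℝ) 1, (p m).eval t * (p n).eval t * (1 + t ^ 2))
    (R : ℕ → ℕ → ℝ)
    (hRtri : ∀ k n, n < k → R k n = 0)
    (hRband : ∀ k n, R k n ≠ 0 → k = n ∨ k + 2 = n)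
    (hRdiag : ∀ n, 0 < R n n)
    (hchol : ∀ m n, (∑ k ∈ Finset.range (min m n + 1), R k m * R k n) = M m n) :
    IsLUB {x : ℝ | ∃ (N : ℕ) (v : Fin N → ℝ), (∑ i, v i ^ 2) = 1 ∧
        x = ∑ i : Fin N, ∑ j : Fin N, v i * M (i : ℕ) (j : ℕ) * v j} 2 ∧
      ∀ n, |R n n| + |R n (n + 2)| ≤ 2 := by
  -- Key identities
  have key1 : ∀ (N : ℕ) (v : Fin N → ℝ),
      (∫ t in Set.Icc (-1:ℝ) 1, (∑ i, v i * (p (i:ℕ)).eval t)^2) = ∑ i, v i ^ 2 := by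
    intro N v
    have H := key_expand p (fun _ => (1:ℝ)) continuous_const N v
    simp only [mul_one] at H
    rw [H]
    refine Finset.sum_congr rfl fun i _ => ?_
    rw [Finset.sum_eq_single i]
    · rw [horth]; simp [sq]
    · intro j _ hj
      rw [horth, if_neg (fun h => hj (Fin.val_injective h).symm)]
      ring
    · intro h; exact absurd (Finset.mem_univ i) h
  have key2 : ∀ (N : ℕ) (v : Fin N → ℝ),
      (∑ i : Fin N, ∑ j : Fin N, v i * M (i : ℕ) (j : ℕ) * v j)
        = ∫ t in Set.Icc (-1:ℝ) 1, (∑ i, v i * (p (i:ℕ)).eval t)^2 * (1 + t^2) := by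
    intro N v
    have H : (∫ t in Set.Icc (-1:ℝ) 1, (∑ i, v i * (p (i:ℕ)).eval t)^2 * (1 + t^2))
        = ∑ i : Fin N, ∑ j : Fin N, v i * v j *
          ∫ t in Set.Icc (-1:ℝ) 1, (p (i:ℕ)).eval t * (p (j:ℕ)).eval t * (1 + t^2) :=
      key_expand p (fun t => 1 + t^2) (continuous_const.add (continuous_pow 2)) N v
    rw [H]
    refine Finset.sum_congr rfl fun i _ => Finset.sum_congr rfl fun j _ => ?_
    rw [hM]
    ring
  constructor
  · constructor
    · -- upper bound
      rintro x ⟨N, v, hv1, rfl⟩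
      rw [key2 N v]
      have hg : Continuous fun t : ℝ => ∑ i, v i * (p (i:ℕ)).eval t :=
        continuous_finset_sum _ fun i _ => continuous_const.mul (p _).continuous
      calc (∫ t in Set.Icc (-1:ℝ) 1, (∑ i, v i * (p (i:ℕ)).eval t)^2 * (1 + t^2))
          ≤ 2 * ∫ t in Set.Icc (-1:ℝ) 1, (∑ i, v i * (p (i:ℕ)).eval t)^2 := mono_lemma _ hg
        _ = 2 := by rw [key1 N v, hv1, mul_one]
    · -- least
      intro bnd hbnd
      by_contra hlt
      push_neg at hlt
      obtain ⟨k, hk⟩ := exists_nat_gt (2/(2-bnd) : ℝ)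
      -- membership of 2 - 2/(2k+3)
      set c : ℝ := Real.sqrt ((2*(k:ℝ)+1)/2) with hcdef
      have hc2 : c^2 = (2*(k:ℝ)+1)/2 := Real.sq_sqrt (by positivity)
      have hdegf : (Polynomial.C c * Polynomial.X ^ k : Polynomial ℝ).natDegree ≤ k :=
        le_trans (Polynomial.natDegree_C_mul_le c _) (by simp [Polynomial.natDegree_X_pow])
      obtain ⟨v, hv⟩ := span_lemma p hdeg hlead k _ hdegf
      have heval : ∀ t : ℝ, (∑ i : Fin (k+1), v i * (p (i:ℕ)).eval t) = c * t^k := by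
        intro t
        have h := congrArg (Polynomial.eval t) hv
        simp only [Polynomial.eval_finset_sum, Polynomial.eval_mul, Polynomial.eval_C,
          Polynomial.eval_pow, Polynomial.eval_X] at h
        exact h.symm
      have hk1 : (2*(k:ℝ)+1) ≠ 0 := by positivity
      have hk3 : (2*(k:ℝ)+3) ≠ 0 := by positivity
      have hv1 : (∑ i, v i ^ 2) = 1 := by
        rw [← key1 (k+1) v]
        simp only [heval]
        rw [show (fun t : ℝ => (c*t^k)^2) = fun t : ℝ => c^2 * t^(2*k) from
          funext fun t => by ring]
        rw [MeasureTheory.integral_const_mul, intIcc_even, hc2]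
        field_simp
      have hQ : (∑ i : Fin (k+1), ∑ j : Fin (k+1), v i * M (i:ℕ) (j:ℕ) * v j)
          = 2 - 2/(2*(k:ℝ)+3) := by
        rw [key2 (k+1) v]
        simp only [heval]
        rw [show (fun t : ℝ => (c*t^k)^2 * (1+t^2))
            = fun t : ℝ => c^2 * t^(2*k) + c^2 * t^(2*(k+1)) from funext fun t => by ring]
        rw [MeasureTheory.integral_add (f := fun t : ℝ => c^2 * t^(2*k))
          (g := fun t : ℝ => c^2 * t^(2*(k+1)))
          (Continuous.integrableOn_Icc (by fun_prop))
          (Continuous.integrableOn_Icc (by fun_prop)),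
          MeasureTheory.integral_const_mul, MeasureTheory.integral_const_mul,
          intIcc_even k, intIcc_even (k+1), hc2]
        push_cast
        field_simp
        ring
      have hmem : (2 - 2/(2*(k:ℝ)+3)) ∈ {x : ℝ | ∃ (N : ℕ) (v : Fin N → ℝ),
          (∑ i, v i ^ 2) = 1 ∧
          x = ∑ i : Fin N, ∑ j : Fin N, v i * M (i : ℕ) (j : ℕ) * v j} :=
        ⟨k+1, v, hv1, hQ.symm⟩
      have hle := hbnd hmem
      have h1 : (0:ℝ) < 2 - bnd := by linarith
      have h2 : (2:ℝ) < (k:ℝ) * (2 - bnd) := (div_lt_iff₀ h1).mp hk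
      have hd : (0:ℝ) < 2*(k:ℝ)+3 := by positivity
      have h3 : (2 - bnd) * (2*(k:ℝ)+3) ≤ 2 := by
        have : 2 - bnd ≤ 2/(2*(k:ℝ)+3) := by linarith
        calc (2 - bnd) * (2*(k:ℝ)+3) ≤ (2/(2*(k:ℝ)+3)) * (2*(k:ℝ)+3) := by
              exact mul_le_mul_of_nonneg_right this (le_of_lt hd)
          _ = 2 := by field_simp
      nlinarith [(Nat.cast_nonneg k : (0:ℝ) ≤ (k:ℝ)), h1, h2, h3]
  · -- Cholesky band bound
    intro n
    set a := R n n with ha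
    set b := R n (n+2) with hb
    have hne : n ≠ n + 2 := by omega
    have Ipair1 := pair_expand p (fun _ => (1:ℝ)) continuous_const n (n+2) a b
    simp only [mul_one, horth, hne, if_true, if_false, eq_self_iff_true, ite_true, ite_false,
      mul_zero, mul_one, add_zero] at Ipair1
    have Ipair2 : (∫ t in Set.Icc (-1:ℝ) 1,
          (a * (p n).eval t + b * (p (n+2)).eval t)^2 * (1 + t^2))
        = a^2 * (∫ t in Set.Icc (-1:ℝ) 1, (p n).eval t * (p n).eval t * (1 + t^2))
          + 2*a*b * (∫ t in Set.Icc (-1:ℝ) 1, (p n).eval t * (p (n+2)).eval t * (1 + t^2))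
          + b^2 * (∫ t in Set.Icc (-1:ℝ) 1, (p (n+2)).eval t * (p (n+2)).eval t * (1 + t^2)) :=
      pair_expand p (fun t => 1 + t^2) (continuous_const.add (continuous_pow 2)) n (n+2) a b
    rw [← hM n n, ← hM n (n+2), ← hM (n+2) (n+2)] at Ipair2
    have hg2 : Continuous fun t : ℝ => a * (p n).eval t + b * (p (n+2)).eval t :=
      (continuous_const.mul (p n).continuous).add (continuous_const.mul (p (n+2)).continuous)
    have h5 : a^2 * M n n + 2*a*b * M n (n+2) + b^2 * M (n+2) (n+2) ≤ 2*(a^2+b^2) := by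
      rw [← Ipair2, ← Ipair1]
      exact mono_lemma _ hg2
    -- sums from Cholesky
    have hsum1 := hchol n n
    rw [min_self] at hsum1
    have hsum2 := hchol n (n+2)
    rw [min_eq_left (by omega : n ≤ n + 2)] at hsum2
    have hsum3 := hchol (n+2) (n+2)
    rw [min_self] at hsum3
    have hext1 : ∑ k ∈ Finset.range (n+3), R k n * R k n
        = ∑ k ∈ Finset.range (n+1), R k n * R k n := by
      refine (Finset.sum_subset (Finset.range_subset_range.mpr (by omega)) fun k hk hk' => ?_).symm
      rw [hRtri k n (by simp only [Finset.mem_range] at hk'; omega)]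
      ring
    have hext2 : ∑ k ∈ Finset.range (n+3), R k n * R k (n+2)
        = ∑ k ∈ Finset.range (n+1), R k n * R k (n+2) := by
      refine (Finset.sum_subset (Finset.range_subset_range.mpr (by omega)) fun k hk hk' => ?_).symm
      rw [hRtri k n (by simp only [Finset.mem_range] at hk'; omega)]
      ring
    have hTeq : (∑ k ∈ Finset.range (n+3), (a * R k n + b * R k (n+2))^2)
        = a^2 * M n n + 2*a*b * M n (n+2) + b^2 * M (n+2) (n+2) := by
      calc (∑ k ∈ Finset.range (n+3), (a * R k n + b * R k (n+2))^2)
          = ∑ k ∈ Finset.range (n+3), (a^2 * (R k n * R k n)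
              + 2*a*b * (R k n * R k (n+2)) + b^2 * (R k (n+2) * R k (n+2))) :=
            Finset.sum_congr rfl fun k _ => by ring
        _ = a^2 * (∑ k ∈ Finset.range (n+3), R k n * R k n)
            + 2*a*b * (∑ k ∈ Finset.range (n+3), R k n * R k (n+2))
            + b^2 * (∑ k ∈ Finset.range (n+3), R k (n+2) * R k (n+2)) := by
          rw [Finset.sum_add_distrib, Finset.sum_add_distrib,
            ← Finset.mul_sum, ← Finset.mul_sum, ← Finset.mul_sum]
        _ = _ := by rw [hext1, hext2, hsum1, hsum2, hsum3]
    have hterm : (a^2 + b^2)^2 ≤ ∑ k ∈ Finset.range (n+3), (a * R k n + b * R k (n+2))^2 := by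
      have hn : n ∈ Finset.range (n+3) := by simp only [Finset.mem_range]; omega
      have hs := Finset.single_le_sum
        (f := fun k => (a * R k n + b * R k (n+2))^2) (fun k _ => sq_nonneg _) hn
      calc (a^2 + b^2)^2 = (a * R n n + b * R n (n+2))^2 := by rw [← ha, ← hb]; ring
        _ ≤ _ := hs
    have h6 : (a^2 + b^2)^2 ≤ 2*(a^2+b^2) := by
      calc (a^2 + b^2)^2 ≤ _ := hterm
        _ = _ := hTeq
        _ ≤ 2*(a^2+b^2) := h5
    have hs2 : a^2 + b^2 ≤ 2 := by nlinarith [h6, sq_nonneg a, sq_nonneg b]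
    nlinarith [hs2, abs_nonneg a, abs_nonneg b, sq_abs a, sq_abs b, sq_nonneg (|a| - |b|)]
end
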